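/- Let m < n be coprime positive integers and let w, z ∈ ℂ with w ∉ {0, 1} and z ∉ {0, 1}. Suppose w^n z^m = 1, w^m z^n = 1, and (z/w)^{mn} · ((1 − w)/(1 − z))^{2mn} = 1. Then either w^{m+n} = 1 and z^{m+n} = 1, or w^{n−m} = 1 and z^{n−m} = 1. -/

import Mathlib

/-- Let `m < n` be coprime positive integers and `w, z ∈ ℂ \ {0, 1}` with
`w^n z^m = 1`, `w^m z^n = 1` and `(z/w)^{mn}((1 − w)/(1 − z))^{2mn} = 1`.  Then either
`w` and `z` are `(m+n)`-th roots of unity, or they are `(n−m)`-th roots of unity. -/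
theorem triangulation_solutions (m n : ℕ) (hm : 0 < m) (hmn : m < n)
    (hcop : Nat.Coprime m n) (w z : ℂ) (hw0 : w ≠ 0) (hw1 : w ≠ 1)
    (hz0 : z ≠ 0) (hz1 : z ≠ 1)
    (h1 : w ^ n * z ^ m = 1) (h2 : w ^ m * z ^ n = 1)
    (h3 : (z / w) ^ (m * n) * ((1 - w) / (1 - z)) ^ (2 * (m * n)) = 1) :
    (w ^ (m + n) = 1 ∧ z ^ (m + n) = 1) ∨ (w ^ (n - m) = 1 ∧ z ^ (n - m) = 1) := by
  have hnm : 0 < n - m := Nat.sub_pos_of_lt hmn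
  have hn' : m + (n - m) = n := Nat.add_sub_cancel' hmn.le
  -- w^(n-m) = z^(n-m)
  have heq : w ^ (n - m) = z ^ (n - m) := by
    have key : w ^ m * z ^ m * w ^ (n - m) = w ^ m * z ^ m * z ^ (n - m) := by
      calc w ^ m * z ^ m * w ^ (n - m) = w ^ (m + (n - m)) * z ^ m := by ring
        _ = 1 := by rw [hn']; exact h1
        _ = w ^ m * z ^ (m + (n - m)) := by rw [hn']; exact h2.symm
        _ = w ^ m * z ^ m * z ^ (n - m) := by ring
    exact mul_left_cancel₀ (mul_ne_zero (pow_ne_zero _ hw0) (pow_ne_zero _ hz0)) key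
  -- (w*z)^(m+n) = 1
  have hprod : (w * z) ^ (m + n) = 1 := by
    calc (w * z) ^ (m + n) = (w ^ n * z ^ m) * (w ^ m * z ^ n) := by ring
      _ = 1 := by rw [h1, h2, one_mul]
  -- |w| = |z|
  have habs_eq : ‖w‖ = ‖z‖ := by
    have h := congrArg norm heq
    simp only [norm_pow] at h
    exact (pow_left_inj₀ (norm_nonneg w) (norm_nonneg z) hnm.ne' ).mp h
  -- |w| * |z| = 1
  have hwz1 : ‖w‖ * ‖z‖ = 1 := by
    have h := congrArg norm hprod
    simp only [norm_pow, norm_mul, norm_one] at h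
    have := (pow_left_inj₀ (mul_nonneg (norm_nonneg w) (norm_nonneg z))
      zero_le_one (by omega : m + n ≠ 0)).mp (by rw [h, one_pow])
    simpa using this
  have habsw : ‖w‖ = 1 := by
    rw [← habs_eq] at hwz1
    rcases mul_self_eq_one_iff.mp hwz1 with h | h
    · exact h
    · nlinarith [norm_nonneg w]
  have habsz : ‖z‖ = 1 := habs_eq ▸ habsw
  have h1w : (1 : ℂ) - w ≠ 0 := sub_ne_zero.mpr (Ne.symm hw1)
  have h1z : (1 : ℂ) - z ≠ 0 := sub_ne_zero.mpr (Ne.symm hz1)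
  -- |1 - w| = |1 - z|
  have habs1 : ‖1 - w‖ = ‖1 - z‖ := by
    have h := congrArg norm h3
    simp only [norm_pow, norm_mul, norm_div, norm_one, habsw, habsz] at h
    rw [div_one, one_pow, one_mul] at h
    have h' : (‖1 - w‖ / ‖1 - z‖) ^ (2 * (m * n)) = 1 ^ (2 * (m * n)) := by
      rw [h, one_pow]
    have hd := (pow_left_inj₀ (div_nonneg (norm_nonneg _) (norm_nonneg _))
      zero_le_one (Nat.mul_ne_zero two_ne_zero (Nat.mul_ne_zero hm.ne' (by omega)))).mp h'
    have hz' : ‖1 - z‖ ≠ 0 := norm_ne_zero_iff.mpr h1z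
    field_simp at hd
    exact hd
  -- real/imaginary analysis
  have hnw : Complex.normSq w = 1 := by
    rw [← Complex.sq_norm, habsw, one_pow]
  have hnz : Complex.normSq z = 1 := by
    rw [← Complex.sq_norm, habsz, one_pow]
  have hn1 : Complex.normSq (1 - w) = Complex.normSq (1 - z) := by
    rw [← Complex.sq_norm, ← Complex.sq_norm, habs1]
  have hre : w.re = z.re := by
    simp only [Complex.normSq_apply, Complex.sub_re, Complex.sub_im, Complex.one_re,
      Complex.one_im] at hn1
    simp only [Complex.normSq_apply] at hnw hnz
    nlinarith
  have him : z.im = w.im ∨ z.im = -w.im := by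
    simp only [Complex.normSq_apply] at hnw hnz
    have : z.im ^ 2 = w.im ^ 2 := by linear_combination hnz - hnw + (z.re + w.re) * hre
    rcases sq_eq_sq_iff_eq_or_eq_neg.mp this with h | h
    · exact Or.inl h
    · exact Or.inr h
  rcases him with h | h
  · -- z = w
    have hzw : z = w := Complex.ext hre.symm h
    left
    constructor
    · rw [pow_add]
      rw [hzw] at h1
      rw [mul_comm]
      exact h1
    · rw [hzw, pow_add]
      rw [hzw] at h1
      rw [mul_comm]
      exact h1
  · -- z = conj w, so w * z = 1
    have hzw : z = starRingEnd ℂ w := by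
      apply Complex.ext
      · simpa using hre.symm
      · simpa using h
    have hwz : w * z = 1 := by
      rw [hzw, Complex.mul_conj, hnw, Complex.ofReal_one]
    right
    have hwzm : w ^ m * z ^ m = 1 := by rw [← mul_pow, hwz, one_pow]
    have hw' : w ^ (n - m) = 1 := by
      calc w ^ (n - m) = w ^ (n - m) * (w ^ m * z ^ m) := by rw [hwzm, mul_one]
        _ = w ^ (m + (n - m)) * z ^ m := by ring
        _ = 1 := by rw [hn']; exact h1
    have hz' : z ^ (n - m) = 1 := by
      calc z ^ (n - m) = (w ^ (n - m)) * z ^ (n - m) := by rw [hw', one_mul]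
        _ = (w * z) ^ (n - m) := by rw [mul_pow]
        _ = 1 := by rw [hwz, one_pow]
    exact ⟨hw', hz'⟩
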